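/- Let p be a prime and let R be a commutative local integral domain of characteristic p, with maximal ideal m, such that the residue field R/m is infinite. For c ∈ R let g_c : R → R denote the map g_c(x) = x^p − c^(p−1)·x. Suppose there exists an integer n ≥ 2 with the following (Baldwin–Saxl) property: for any c_1, …, c_n ∈ R there is an index i such that the intersection of the images g_{c_j}(R) over all j ≠ i is contained in the image g_{c_i}(R). Then the Artin–Schreier map x ↦ x^p − x is a surjection from R onto R. -/

import Mathlib

namespace KSW

open Finset Polynomial

section Defs

variable {R : Type*} [CommRing R] (p : ℕ)

/-- the map `g_c`. -/
def gpoly (c x : R) : R := x ^ p - c ^ (p - 1) * x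

/-- evaluation of an "additive polynomial" given by coefficients `w` of degree index `K`. -/
def ev (K : ℕ) (w : ℕ → R) (z : R) : R := ∑ k ∈ Finset.range (K + 1), w k * z ^ p ^ k

/-- `x` is a `p^d`-th power. -/
def Deep (d : ℕ) (x : R) : Prop := ∃ y : R, y ^ p ^ d = x

open scoped Classical in
noncomputable def proot (x : R) : R := if h : ∃ y : R, y ^ p = x then h.choose else 0

end Defs

noncomputable def delta {R : Type*} [CommRing R] (p : ℕ) (w : ℕ → R) (γ : R) (K : ℕ) : ℕ → R
  | 0 => 0
  | s + 1 => proot p (w (K - s) + γ * delta p w γ K s)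

noncomputable def wExt' {R : Type*} [CommRing R] (p : ℕ) (w : ℕ → R) (γ r : R) : ℕ → R
  | 0 => -(w 0 * γ)
  | k + 1 => w k * r ^ ((p - 1) * p ^ k) - w (k + 1) * γ ^ p ^ (k + 1)

section Defs2

variable {R : Type*} [CommRing R] (p : ℕ)

noncomputable def rOf (K : ℕ) (w : ℕ → R) (γ : R) : R := w 0 + γ * delta p w γ K K

def Efn (K k : ℕ) : ℕ := ∑ u ∈ Finset.Ico (K + 1 - k) (K + 1), p ^ u

def Ffn (s t : ℕ) : ℕ := ∑ u ∈ Finset.Ico (s - t) s, p ^ u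

def Rbar (K : ℕ) (w : ℕ → R) (γ : R) : R :=
  ∑ k ∈ Finset.range (K + 1), γ ^ Efn p K k * w k ^ p ^ (K - k)

end Defs2

section Basic

variable {R : Type*} [CommRing R] {p : ℕ} [Fact p.Prime] [CharP R p]

theorem pow_ppow_add (x y : R) (n : ℕ) : (x + y) ^ p ^ n = x ^ p ^ n + y ^ p ^ n :=
  add_pow_char_pow x y p n

theorem pow_ppow_sub (x y : R) (n : ℕ) : (x - y) ^ p ^ n = x ^ p ^ n - y ^ p ^ n :=
  sub_pow_char_pow x y n

theorem pow_p_add (x y : R) : (x + y) ^ p = x ^ p + y ^ p := add_pow_char x y p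

theorem sum_pow_ppow {ι : Type*} (s : Finset ι) (f : ι → R) (n : ℕ) :
    (∑ i ∈ s, f i) ^ p ^ n = ∑ i ∈ s, f i ^ p ^ n := by
  haveI : ExpChar R p := ExpChar.prime Fact.out
  simpa only [iterateFrobenius_def] using map_sum (iterateFrobenius R p n) f s

theorem gpoly_add (c x y : R) : gpoly p c x + gpoly p c y = gpoly p c (x + y) := by
  simp only [gpoly, pow_p_add]; ring

theorem gpoly_range_add {c a b : R} (ha : a ∈ Set.range (gpoly p c))
    (hb : b ∈ Set.range (gpoly p c)) : a + b ∈ Set.range (gpoly p c) := by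
  obtain ⟨x, hx⟩ := ha; obtain ⟨y, hy⟩ := hb
  exact ⟨x + y, by rw [← gpoly_add, hx, hy]⟩

theorem gpoly_range_sub {c a b : R} (ha : a ∈ Set.range (gpoly p c))
    (hb : b ∈ Set.range (gpoly p c)) : a - b ∈ Set.range (gpoly p c) := by
  obtain ⟨x, hx⟩ := ha; obtain ⟨y, hy⟩ := hb
  refine ⟨x - y, ?_⟩
  have : gpoly p c (x - y) + gpoly p c y = gpoly p c (x - y + y) := gpoly_add ..
  simp only [sub_add_cancel] at this
  rw [← hx, ← this, hy]; ring

end Basic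

section DeepLemmas

variable {R : Type*} [CommRing R] {p : ℕ} [Fact p.Prime] [CharP R p]

theorem Deep.mono {d e : ℕ} {x : R} (h : Deep p d x) (hle : e ≤ d) : Deep p e x := by
  obtain ⟨y, hy⟩ := h
  exact ⟨y ^ p ^ (d - e), by rw [← pow_mul, ← pow_add, Nat.sub_add_cancel hle, hy]⟩

theorem deep_zero (d : ℕ) : Deep p d (0 : R) := ⟨0, zero_pow (pow_ne_zero _ (Fact.out : p.Prime).ne_zero)⟩

theorem deep_one (d : ℕ) : Deep p d (1 : R) := ⟨1, one_pow _⟩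

theorem Deep.add {d : ℕ} {x y : R} (hx : Deep p d x) (hy : Deep p d y) : Deep p d (x + y) := by
  obtain ⟨a, ha⟩ := hx; obtain ⟨b, hb⟩ := hy
  exact ⟨a + b, by rw [pow_ppow_add, ha, hb]⟩

theorem Deep.mul {d : ℕ} {x y : R} (hx : Deep p d x) (hy : Deep p d y) : Deep p d (x * y) := by
  obtain ⟨a, ha⟩ := hx; obtain ⟨b, hb⟩ := hy
  exact ⟨a * b, by rw [mul_pow, ha, hb]⟩

theorem Deep.pow {d : ℕ} {x : R} (hx : Deep p d x) (e : ℕ) : Deep p d (x ^ e) := by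
  obtain ⟨a, ha⟩ := hx
  exact ⟨a ^ e, by rw [← ha, ← pow_mul, mul_comm e, pow_mul]⟩

theorem Deep.sub {d : ℕ} {x y : R} (hx : Deep p d x) (hy : Deep p d y) : Deep p d (x - y) := by
  obtain ⟨a, ha⟩ := hx; obtain ⟨b, hb⟩ := hy
  exact ⟨a - b, by rw [pow_ppow_sub, ha, hb]⟩

theorem Deep.neg {d : ℕ} {x : R} (hx : Deep p d x) : Deep p d (-x) := by
  simpa using (deep_zero d).sub hx

theorem deep_pow_self (x : R) (d : ℕ) : Deep p d (x ^ p ^ d) := ⟨x, rfl⟩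

theorem proot_pow {x : R} (h : Deep p 1 x) : proot p x ^ p = x := by
  obtain ⟨y, hy⟩ := h
  have hex : ∃ y : R, y ^ p = x := ⟨y, by rw [← hy, pow_one]⟩
  rw [proot, dif_pos hex]
  exact hex.choose_spec

theorem ppow_inj [IsDomain R] {e : ℕ} {x y : R} (h : x ^ p ^ e = y ^ p ^ e) : x = y := by
  have : (x - y) ^ p ^ e = 0 := by rw [pow_ppow_sub, h, sub_self]
  have := pow_eq_zero_iff (pow_ne_zero e (Fact.out : p.Prime).ne_zero) |>.mp this
  exact sub_eq_zero.mp this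

theorem proot_deep [IsDomain R] {d : ℕ} {x : R} (h : Deep p (d + 1) x) : Deep p d (proot p x) := by
  obtain ⟨y, hy⟩ := h
  have h1 : Deep p 1 x := Deep.mono ⟨y, hy⟩ (by omega)
  have hpr : proot p x ^ p = x := proot_pow h1
  refine ⟨y, ppow_inj (p := p) (e := 1) ?_⟩
  rw [pow_one, hpr, ← hy, ← pow_mul, ← pow_succ]

end DeepLemmas

section Div

variable {R : Type*} [CommRing R] [IsDomain R] {p : ℕ} [Fact p.Prime] [CharP R p]
variable {d K : ℕ} {w : ℕ → R} {γ : R}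

theorem delta_deep (hw : ∀ k, Deep p d (w k)) (hγ : Deep p d γ) (hdK : K + 1 ≤ d) :
    ∀ s, s ≤ K → Deep p (d - s) (delta p w γ K s) := by
  intro s
  induction s with
  | zero => intro _; exact deep_zero _
  | succ s ih =>
    intro hs
    have harg : Deep p (d - s) (w (K - s) + γ * delta p w γ K s) :=
      ((hw (K - s)).mono (by omega)).add ((hγ.mono (by omega)).mul (ih (by omega)))
    have : d - s = (d - (s + 1)) + 1 := by omega
    rw [this] at harg
    exact proot_deep harg

theorem delta_pow (hw : ∀ k, Deep p d (w k)) (hγ : Deep p d γ) (hdK : K + 1 ≤ d)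
    {s : ℕ} (hs : s < K) :
    delta p w γ K (s + 1) ^ p = w (K - s) + γ * delta p w γ K s := by
  have harg : Deep p (d - s) (w (K - s) + γ * delta p w γ K s) :=
    ((hw (K - s)).mono (by omega)).add
      ((hγ.mono (by omega)).mul (delta_deep hw hγ hdK s (by omega)))
  exact proot_pow (harg.mono (by omega))

theorem rOf_deep (hw : ∀ k, Deep p d (w k)) (hγ : Deep p d γ) (hdK : K + 1 ≤ d) :
    Deep p (d - K) (rOf p K w γ) :=
  ((hw 0).mono (by omega)).add ((hγ.mono (by omega)).mul (delta_deep hw hγ hdK K le_rfl))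

theorem div_eval (hw : ∀ k, Deep p d (w k)) (hγ : Deep p d γ) (hdK : K + 1 ≤ d) (x : R) :
    ev p K w x =
      (∑ j ∈ Finset.range K, delta p w γ K (K - j) * x ^ p ^ j) ^ p
        - γ * (∑ j ∈ Finset.range K, delta p w γ K (K - j) * x ^ p ^ j) + rOf p K w γ * x := by
  set B := ∑ j ∈ Finset.range K, delta p w γ K (K - j) * x ^ p ^ j with hB
  have hfull : ∑ j ∈ Finset.range (K + 1), delta p w γ K (K - j) * x ^ p ^ j = B := by
    rw [Finset.sum_range_succ, Nat.sub_self]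
    simp [delta]
    exact hB.symm
  have hBp : B ^ p = (∑ j ∈ Finset.range K, (w (j + 1) + γ * delta p w γ K (K - j - 1)) * x ^ p ^ (j + 1)) := by
    rw [hB]
    rw [show (p : ℕ) = p ^ 1 by rw [pow_one]]
    rw [sum_pow_ppow]
    refine Finset.sum_congr rfl ?_
    intro j hj
    rw [Finset.mem_range] at hj
    rw [mul_pow, ← pow_mul, pow_one, ← pow_succ]
    congr 1
    have h1 : K - j = (K - j - 1) + 1 := by omega
    rw [h1, delta_pow hw hγ hdK (by omega), show K - (K - j - 1) = j + 1 by omega]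
    norm_num
  have hT : ∑ j ∈ Finset.range K, delta p w γ K (K - j - 1) * x ^ p ^ (j + 1)
      = B - delta p w γ K K * x := by
    have := Finset.sum_range_succ' (fun j => delta p w γ K (K - j) * x ^ p ^ j) K
    rw [hfull] at this
    have h0 : delta p w γ K (K - 0) * x ^ p ^ 0 = delta p w γ K K * x := by
      simp
    rw [h0] at this
    have hcong : ∑ j ∈ Finset.range K, delta p w γ K (K - (j + 1)) * x ^ p ^ (j + 1)
        = ∑ j ∈ Finset.range K, delta p w γ K (K - j - 1) * x ^ p ^ (j + 1) := by
      refine Finset.sum_congr rfl fun j _ => by rw [show K - (j+1) = K - j - 1 from rfl]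
    rw [hcong] at this
    rw [eq_sub_iff_add_eq]
    exact this.symm
  have hev : ev p K w x = ∑ j ∈ Finset.range K, w (j + 1) * x ^ p ^ (j + 1) + w 0 * x := by
    rw [ev, Finset.sum_range_succ']
    simp
  rw [hev, hBp, rOf]
  have hsplit : ∑ j ∈ Finset.range K, (w (j + 1) + γ * delta p w γ K (K - j - 1)) * x ^ p ^ (j + 1)
      = ∑ j ∈ Finset.range K, w (j + 1) * x ^ p ^ (j + 1)
        + γ * ∑ j ∈ Finset.range K, delta p w γ K (K - j - 1) * x ^ p ^ (j + 1) := by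
    rw [Finset.mul_sum, ← Finset.sum_add_distrib]
    exact Finset.sum_congr rfl fun j _ => by ring
  rw [hsplit, hT]
  ring

theorem Ffn_succ (s t : ℕ) : Ffn p (s + 1) (t + 1) = p ^ s + Ffn p s t := by
  unfold Ffn
  rw [Nat.succ_sub_succ]
  rw [Finset.sum_Ico_succ_top (by omega)]
  ring

theorem Efn_succ (K t : ℕ) : Efn p K (t + 1) = p ^ K + Ffn p K t := by
  unfold Efn Ffn
  rw [Nat.succ_sub_succ]
  rw [Finset.sum_Ico_succ_top (by omega)]
  ring

theorem delta_closed (hw : ∀ k, Deep p d (w k)) (hγ : Deep p d γ) (hdK : K + 1 ≤ d) :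
    ∀ s, s ≤ K → delta p w γ K s ^ p ^ s
      = ∑ t ∈ Finset.range s, γ ^ Ffn p s t * w (K - s + 1 + t) ^ p ^ (s - 1 - t) := by
  intro s
  induction s with
  | zero => intro _; simp [delta]
  | succ s ih =>
    intro hs
    have hpow : delta p w γ K (s + 1) ^ p ^ (s + 1)
        = (w (K - s) + γ * delta p w γ K s) ^ p ^ s := by
      rw [pow_succ, mul_comm (p ^ s) p, pow_mul, delta_pow hw hγ hdK (by omega)]
    rw [hpow, pow_ppow_add, mul_pow, ih (by omega), Finset.mul_sum]
    rw [Finset.sum_range_succ']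
    have h0 : γ ^ Ffn p (s + 1) 0 * w (K - (s + 1) + 1 + 0) ^ p ^ (s + 1 - 1 - 0)
        = w (K - s) ^ p ^ s := by
      have hF0 : Ffn p (s + 1) 0 = 0 := by simp [Ffn]
      rw [hF0, pow_zero, one_mul, show K - (s + 1) + 1 + 0 = K - s by omega,
        show s + 1 - 1 - 0 = s by omega]
    rw [h0]
    have hterm : ∀ t ∈ Finset.range s,
        γ ^ Ffn p (s + 1) (t + 1) * w (K - (s + 1) + 1 + (t + 1)) ^ p ^ (s + 1 - 1 - (t + 1))
          = γ ^ p ^ s * (γ ^ Ffn p s t * w (K - s + 1 + t) ^ p ^ (s - 1 - t)) := by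
      intro t ht
      rw [Ffn_succ, pow_add, show K - (s + 1) + 1 + (t + 1) = K - s + 1 + t by omega,
        show s + 1 - 1 - (t + 1) = s - 1 - t by omega]
      ring
    rw [Finset.sum_congr rfl hterm]
    ring

theorem rOf_pow (hw : ∀ k, Deep p d (w k)) (hγ : Deep p d γ) (hdK : K + 1 ≤ d) :
    rOf p K w γ ^ p ^ K = Rbar p K w γ := by
  rw [rOf, pow_ppow_add, mul_pow, delta_closed hw hγ hdK K le_rfl, Rbar,
    Finset.sum_range_succ']
  have h0 : γ ^ Efn p K 0 * w 0 ^ p ^ (K - 0) = w 0 ^ p ^ K := by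
    have : Efn p K 0 = 0 := by simp [Efn]
    simp [this]
  rw [h0]
  have hterm : ∀ t ∈ Finset.range K,
      γ ^ Efn p K (t + 1) * w (t + 1) ^ p ^ (K - (t + 1))
        = γ ^ p ^ K * (γ ^ Ffn p K t * w (K - K + 1 + t) ^ p ^ (K - 1 - t)) := by
    intro t ht
    rw [Efn_succ, pow_add, show K - K + 1 + t = t + 1 by omega,
      show K - (t + 1) = K - 1 - t by omega]
    ring
  rw [Finset.sum_congr rfl hterm, Finset.mul_sum]
  ring

end Div



section Ext

variable {R : Type*} [CommRing R] [IsDomain R] {p : ℕ} [Fact p.Prime] [CharP R p]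

theorem neg_pow_ppow (a : R) (e : ℕ) : (-a) ^ p ^ e = -(a ^ p ^ e) := by
  rw [show (-a) = 0 - a by ring, pow_ppow_sub,
    zero_pow (pow_ne_zero e (Fact.out : p.Prime).ne_zero), zero_sub]

theorem ev_wExt {K : ℕ} {w : ℕ → R} (γ r : R) (htop : w (K + 1) = 0) (z : R) :
    ev p (K + 1) (wExt' p w γ r) z = ev p K w (r ^ (p - 1) * z ^ p - γ * z) := by
  have hpt : ∀ k : ℕ, (r ^ (p - 1) * z ^ p - γ * z) ^ p ^ k
      = r ^ ((p - 1) * p ^ k) * z ^ p ^ (k + 1) - γ ^ p ^ k * z ^ p ^ k := by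
    intro k
    rw [pow_ppow_sub, mul_pow, mul_pow, ← pow_mul, ← pow_mul,
      show p * p ^ k = p ^ (k + 1) by ring]
  have hR : ev p K w (r ^ (p - 1) * z ^ p - γ * z)
      = (∑ k ∈ Finset.range (K + 1), w k * (r ^ ((p - 1) * p ^ k) * z ^ p ^ (k + 1)))
        - ∑ k ∈ Finset.range (K + 1), w k * (γ ^ p ^ k * z ^ p ^ k) := by
    rw [ev, ← Finset.sum_sub_distrib]
    exact Finset.sum_congr rfl fun k _ => by rw [hpt k]; ring
  have h0 : wExt' p w γ r 0 * z ^ p ^ 0 = -(w 0 * (γ ^ p ^ 0 * z ^ p ^ 0)) := by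
    simp only [wExt', pow_zero, pow_one]
    ring
  have hsucc : ∀ k, wExt' p w γ r (k + 1) * z ^ p ^ (k + 1)
      = w k * (r ^ ((p - 1) * p ^ k) * z ^ p ^ (k + 1))
        - w (k + 1) * (γ ^ p ^ (k + 1) * z ^ p ^ (k + 1)) := by
    intro k; show (w k * r ^ ((p-1) * p ^ k) - w (k+1) * γ ^ p ^ (k+1)) * z ^ p ^ (k+1) = _; ring
  have hL : ev p (K + 1) (wExt' p w γ r) z
      = (∑ k ∈ Finset.range (K + 1), w k * (r ^ ((p - 1) * p ^ k) * z ^ p ^ (k + 1)))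
        - ∑ k ∈ Finset.range (K + 1), w k * (γ ^ p ^ k * z ^ p ^ k) := by
    rw [ev, Finset.sum_range_succ', h0,
      Finset.sum_congr rfl (fun k (_ : k ∈ Finset.range (K + 1)) => hsucc k),
      Finset.sum_sub_distrib]
    have h2 : ∑ k ∈ Finset.range (K + 1), w (k + 1) * (γ ^ p ^ (k + 1) * z ^ p ^ (k + 1))
        = ∑ k ∈ Finset.range K, w (k + 1) * (γ ^ p ^ (k + 1) * z ^ p ^ (k + 1)) := by
      rw [Finset.sum_range_succ, htop]; ring
    have h3 : ∑ k ∈ Finset.range (K + 1), w k * (γ ^ p ^ k * z ^ p ^ k)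
        = w 0 * (γ ^ p ^ 0 * z ^ p ^ 0)
          + ∑ k ∈ Finset.range K, w (k + 1) * (γ ^ p ^ (k + 1) * z ^ p ^ (k + 1)) := by
      rw [Finset.sum_range_succ']; ring
    rw [h2, h3]; ring
  rw [hL, hR]

theorem ext_mem_new {d K : ℕ} {w : ℕ → R} {γ : R} (hw : ∀ k, Deep p d (w k))
    (hγ : Deep p d γ) (hdK : K + 1 ≤ d) (htop : w (K + 1) = 0) {c : R}
    (hc : c ^ (p - 1) = γ) (z : R) :
    ev p (K + 1) (wExt' p w γ (rOf p K w γ)) z ∈ Set.range (gpoly p c) := by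
  have hp1 : 1 ≤ p := (Fact.out : p.Prime).one_lt.le
  rw [ev_wExt γ (rOf p K w γ) htop z]
  set r := rOf p K w γ with hr
  set x := r ^ (p - 1) * z ^ p - γ * z with hx
  set B := ∑ j ∈ Finset.range K, delta p w γ K (K - j) * x ^ p ^ j with hBdef
  have hdiv : ev p K w x = B ^ p - γ * B + r * x := div_eval hw hγ hdK x
  have hrp : r ^ p = r * r ^ (p - 1) := by
    conv_lhs => rw [show p = (p - 1) + 1 by omega]
    rw [pow_succ']
  have hrx : r * x = gpoly p c (r * z) := by
    simp only [gpoly, hc, hx, mul_pow, hrp]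
    ring
  have : ev p K w x = gpoly p c B + gpoly p c (r * z) := by
    rw [hdiv, hrx]
    simp only [gpoly, hc]
    try ring
  rw [this, gpoly_add]
  exact ⟨B + r * z, rfl⟩

theorem Efn_padic {K j : ℕ} (hj : j ≤ K + 1) : Efn p (K + 1) j = p * Efn p K j := by
  unfold Efn
  rw [Finset.sum_Ico_eq_sum_range, Finset.sum_Ico_eq_sum_range, Finset.mul_sum]
  rw [show K + 1 + 1 - (K + 1 + 1 - j) = j by omega, show K + 1 - (K + 1 - j) = j by omega]
  refine Finset.sum_congr rfl fun i hi => ?_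
  rw [Finset.mem_range] at hi
  rw [show K + 1 + 1 - j + i = (K + 1 - j + i) + 1 by omega, pow_succ]
  ring

theorem Efn_shift (K j : ℕ) : Efn p (K + 1) (j + 1) = p ^ (K + 1) + Efn p K j := by
  unfold Efn
  rw [Nat.succ_sub_succ]
  rw [Finset.sum_Ico_succ_top (by omega : K + 1 - j ≤ K + 1)]
  ring

theorem Rbar_wExt {K : ℕ} {w : ℕ → R} (γm r γi : R) (htop : w (K + 1) = 0) :
    Rbar p (K + 1) (wExt' p w γm r) γi
      = γi ^ p ^ (K + 1) * Rbar p K w γi * r ^ ((p - 1) * p ^ K)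
        - γm ^ p ^ (K + 1) * Rbar p K w γi ^ p := by
  have h0 : γi ^ Efn p (K + 1) 0 * wExt' p w γm r 0 ^ p ^ (K + 1 - 0)
      = -(γm ^ p ^ (K + 1) * w 0 ^ p ^ (K + 1)) := by
    have he : Efn p (K + 1) 0 = 0 := by simp [Efn]
    show γi ^ Efn p (K+1) 0 * (-(w 0 * γm)) ^ p ^ (K + 1 - 0) = _
    rw [he, pow_zero, one_mul, Nat.sub_zero, neg_pow_ppow, mul_pow]
    ring
  have hsucc : ∀ k ∈ Finset.range (K + 1),
      γi ^ Efn p (K + 1) (k + 1) * wExt' p w γm r (k + 1) ^ p ^ (K + 1 - (k + 1))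
        = γi ^ p ^ (K + 1) * (γi ^ Efn p K k * w k ^ p ^ (K - k)) * r ^ ((p - 1) * p ^ K)
          - γm ^ p ^ (K + 1)
            * (γi ^ Efn p (K + 1) (k + 1) * w (k + 1) ^ p ^ (K + 1 - (k + 1))) := by
    intro k hk
    rw [Finset.mem_range] at hk
    show γi ^ Efn p (K+1) (k+1)
        * (w k * r ^ ((p - 1) * p ^ k) - w (k + 1) * γm ^ p ^ (k + 1)) ^ p ^ (K + 1 - (k + 1)) = _
    rw [pow_ppow_sub, mul_pow, mul_pow, ← pow_mul, ← pow_mul]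
    rw [show (p - 1) * p ^ k * p ^ (K + 1 - (k + 1)) = (p - 1) * p ^ K by
      rw [mul_assoc, ← pow_add, show k + (K + 1 - (k + 1)) = K by omega]]
    rw [show p ^ (k + 1) * p ^ (K + 1 - (k + 1)) = p ^ (K + 1) by
      rw [← pow_add, show k + 1 + (K + 1 - (k + 1)) = K + 1 by omega]]
    rw [Efn_shift, show K + 1 - (k + 1) = K - k by omega, pow_add]
    ring
  have hA : ∑ k ∈ Finset.range (K + 1),
      γi ^ p ^ (K + 1) * (γi ^ Efn p K k * w k ^ p ^ (K - k)) * r ^ ((p - 1) * p ^ K)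
      = γi ^ p ^ (K + 1) * (∑ k ∈ Finset.range (K + 1), γi ^ Efn p K k * w k ^ p ^ (K - k))
        * r ^ ((p - 1) * p ^ K) := by
    rw [Finset.mul_sum, Finset.sum_mul]
    try exact Finset.sum_congr rfl fun k _ => by ring
  have hBp : (∑ k ∈ Finset.range (K + 1), γi ^ Efn p K k * w k ^ p ^ (K - k)) ^ p
      = w 0 ^ p ^ (K + 1)
        + ∑ k ∈ Finset.range (K + 1),
            γi ^ Efn p (K + 1) (k + 1) * w (k + 1) ^ p ^ (K + 1 - (k + 1)) := by
    have hsp : (∑ k ∈ Finset.range (K + 1), γi ^ Efn p K k * w k ^ p ^ (K - k)) ^ p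
        = ∑ k ∈ Finset.range (K + 1), (γi ^ Efn p K k * w k ^ p ^ (K - k)) ^ p := by
      have := sum_pow_ppow (p := p) (Finset.range (K + 1))
        (fun k => γi ^ Efn p K k * w k ^ p ^ (K - k)) 1
      simpa [pow_one] using this
    rw [hsp, Finset.sum_range_succ' (fun k => (γi ^ Efn p K k * w k ^ p ^ (K - k)) ^ p)]
    have hterm : ∀ k ∈ Finset.range K, (γi ^ Efn p K (k + 1) * w (k + 1) ^ p ^ (K - (k + 1))) ^ p
        = γi ^ Efn p (K + 1) (k + 1) * w (k + 1) ^ p ^ (K + 1 - (k + 1)) := by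
      intro k hk
      rw [Finset.mem_range] at hk
      rw [mul_pow, ← pow_mul, ← pow_mul, mul_comm (Efn p K (k + 1)) p,
        ← Efn_padic (by omega : k + 1 ≤ K + 1),
        show p ^ (K - (k + 1)) * p = p ^ (K + 1 - (k + 1)) by
          rw [← pow_succ, show K - (k + 1) + 1 = K + 1 - (k + 1) by omega]]
    have hlast : ∑ k ∈ Finset.range (K + 1),
        γi ^ Efn p (K + 1) (k + 1) * w (k + 1) ^ p ^ (K + 1 - (k + 1))
        = ∑ k ∈ Finset.range K,
            γi ^ Efn p (K + 1) (k + 1) * w (k + 1) ^ p ^ (K + 1 - (k + 1)) := by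
      rw [Finset.sum_range_succ, htop, show K + 1 - (K + 1) = 0 by omega]
      simp
    have h00 : (γi ^ Efn p K 0 * w 0 ^ p ^ (K - 0)) ^ p = w 0 ^ p ^ (K + 1) := by
      have he : Efn p K 0 = 0 := by simp [Efn]
      rw [he, pow_zero, one_mul, ← pow_mul, Nat.sub_zero,
        show p ^ K * p = p ^ (K + 1) by rw [pow_succ]]
    rw [Finset.sum_congr rfl hterm, hlast, h00]
    ring
  unfold Rbar
  rw [Finset.sum_range_succ', h0, Finset.sum_congr rfl hsucc, Finset.sum_sub_distrib, hA, hBp,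
    ← Finset.mul_sum]
  ring

theorem wExt_zero {K : ℕ} {w : ℕ → R} (γ r : R) (h : ∀ k, K < k → w k = 0) :
    ∀ k, K + 1 < k → wExt' p w γ r k = 0 := by
  intro k hk
  match k, hk with
  | k + 1, hk =>
    show w k * r ^ ((p - 1) * p ^ k) - w (k + 1) * γ ^ p ^ (k + 1) = 0
    rw [h k (by omega), h (k + 1) (by omega)]
    ring

theorem wExt_deep {e : ℕ} {w : ℕ → R} {γ r : R} (hw : ∀ k, Deep p e (w k))
    (hγ : Deep p e γ) (hr : Deep p e r) : ∀ k, Deep p e (wExt' p w γ r k) := by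
  intro k
  match k with
  | 0 => exact ((hw 0).mul hγ).neg
  | k + 1 => exact ((hw k).mul (hr.pow _)).sub ((hw (k + 1)).mul (hγ.pow _))

theorem wExt_top {K : ℕ} {w : ℕ → R} (γ r : R) (htop : w (K + 1) = 0) :
    wExt' p w γ r (K + 1) = w K * r ^ ((p - 1) * p ^ K) := by
  show w K * r ^ ((p - 1) * p ^ K) - w (K + 1) * γ ^ p ^ (K + 1) = _
  rw [htop]; ring

end Ext

section Poly

variable {kk : Type*} [CommRing kk] {p : ℕ}

/-- the cleared remainder, as a polynomial in `γ`. -/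
noncomputable def PsiP (p K : ℕ) (wb : ℕ → kk) : Polynomial kk :=
  ∑ k ∈ Finset.range (K + 1), Polynomial.C (wb k ^ p ^ (K - k)) * Polynomial.X ^ (Efn p K k)

theorem PsiP_eval (K : ℕ) (wb : ℕ → kk) (x : kk) :
    (PsiP p K wb).eval x = Rbar p K wb x := by
  unfold PsiP Rbar
  rw [Polynomial.eval_finset_sum]
  exact Finset.sum_congr rfl fun k _ => by
    rw [Polynomial.eval_mul, Polynomial.eval_C, Polynomial.eval_pow, Polynomial.eval_X]; ring

theorem Efn_mono (hp : 1 ≤ p) {K k l : ℕ} (hkl : k < l) (hl : l ≤ K) :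
    Efn p K k < Efn p K l := by
  unfold Efn
  apply Finset.sum_lt_sum_of_subset (i := K + 1 - l)
  · apply Finset.Ico_subset_Ico_left; omega
  · rw [Finset.mem_Ico]; omega
  · rw [Finset.mem_Ico]; omega
  · exact Nat.pow_pos (by omega)
  · intro j _ _; exact Nat.zero_le _

theorem Efn_le (hp : 1 ≤ p) {K k : ℕ} (hk : k ≤ K) : Efn p K k ≤ Efn p K K := by
  rcases Nat.lt_or_ge k K with h | h
  · exact (Efn_mono hp h le_rfl).le
  · have : k = K := by omega
    rw [this]

theorem PsiP_coeff_top (hp : 1 ≤ p) (K : ℕ) (wb : ℕ → kk) :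
    (PsiP p K wb).coeff (Efn p K K) = wb K := by
  unfold PsiP
  rw [Polynomial.finset_sum_coeff]
  rw [Finset.sum_eq_single K]
  · rw [Polynomial.coeff_C_mul, Polynomial.coeff_X_pow, if_pos rfl, Nat.sub_self, pow_zero,
      pow_one, mul_one]
  · intro k hk hne
    rw [Finset.mem_range] at hk
    have hkK : k < K := Nat.lt_of_le_of_ne (by omega) hne
    rw [Polynomial.coeff_C_mul, Polynomial.coeff_X_pow, if_neg, mul_zero]
    exact (Efn_mono hp hkK le_rfl).ne'
  · intro h
    exact absurd (Finset.self_mem_range_succ K) h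

theorem PsiP_ne_zero (hp : 1 ≤ p) {K : ℕ} {wb : ℕ → kk} (h : wb K ≠ 0) :
    PsiP p K wb ≠ 0 := fun hz => h (by rw [← PsiP_coeff_top hp K wb, hz, Polynomial.coeff_zero])

theorem PsiP_natDegree_le (hp : 1 ≤ p) (K : ℕ) (wb : ℕ → kk) :
    (PsiP p K wb).natDegree ≤ Efn p K K := by
  unfold PsiP
  refine Polynomial.natDegree_sum_le_of_forall_le _ _ fun k hk => ?_
  rw [Finset.mem_range] at hk
  refine le_trans (Polynomial.natDegree_C_mul_le _ _) ?_
  refine le_trans (Polynomial.natDegree_X_pow_le _) (Efn_le hp (by omega))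

theorem Efn_top_succ (K : ℕ) : Efn p (K + 1) (K + 1) = Efn p K K + p ^ (K + 1) := by
  unfold Efn
  rw [show K + 1 + 1 - (K + 1) = K + 1 - K by omega,
    Finset.sum_Ico_succ_top (by omega : K + 1 - K ≤ K + 1)]

theorem pE_identity (hp : 1 ≤ p) (K : ℕ) : (p - 1) * Efn p K K + p = p ^ (K + 1) := by
  induction K with
  | zero =>
    have : Efn p 0 0 = 0 := by simp [Efn]
    rw [this, pow_one]; omega
  | succ K ih =>
    rw [Efn_top_succ, Nat.mul_add]
    have h2 : (p - 1) * p ^ (K + 1) + p ^ (K + 1) = p ^ (K + 2) := by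
      rw [Nat.sub_one_mul, Nat.sub_add_cancel (Nat.le_mul_of_pos_left _ (by omega)), pow_succ]
      ring
    have h3 : p ^ (K + 1 + 1) = p ^ (K + 2) := rfl
    omega

end Poly

section LocalSel

theorem isUnit_of_residue_ne_zero {R : Type*} [CommRing R] [IsLocalRing R] {x : R}
    (h : IsLocalRing.residue R x ≠ 0) : IsUnit x := by
  by_contra hx
  refine h ?_
  have hmem : x ∈ IsLocalRing.maximalIdeal R := hx
  rwa [← IsLocalRing.ker_residue, RingHom.mem_ker] at hmem

theorem residue_ne_zero_of_isUnit {R : Type*} [CommRing R] [IsLocalRing R] {x : R}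
    (h : IsUnit x) : IsLocalRing.residue R x ≠ 0 := by
  intro h0
  have hmem : x ∈ IsLocalRing.maximalIdeal R := by
    rwa [← IsLocalRing.ker_residue, RingHom.mem_ker]
  exact hmem h

theorem map_Rbar {R S : Type*} [CommRing R] [CommRing S] (f : R →+* S) (p K : ℕ)
    (w : ℕ → R) (γ : R) : f (Rbar p K w γ) = Rbar p K (fun k => f (w k)) (f γ) := by
  unfold Rbar
  rw [map_sum]
  exact Finset.sum_congr rfl fun k _ => by rw [map_mul, map_pow, map_pow]

theorem exists_avoid {k : Type*} [Field k] [Infinite k] (M : ℕ) (hM : M ≠ 0)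
    (L : List (Polynomial k)) (hL : ∀ φ ∈ L, φ ≠ 0) :
    ∃ x : k, x ≠ 0 ∧ ∀ φ ∈ L, φ.eval (x ^ M) ≠ 0 := by
  classical
  set Φ := L.prod with hΦdef
  have hΦ : Φ ≠ 0 := List.prod_ne_zero fun h0 => (hL 0 h0) rfl
  have hroots : {γ : k | Φ.IsRoot γ}.Finite := Polynomial.finite_setOf_isRoot hΦ
  have hBad : {x : k | Φ.eval (x ^ M) = 0}.Finite := by
    have hsub : {x : k | Φ.eval (x ^ M) = 0}
        ⊆ ⋃ γ ∈ {γ : k | Φ.IsRoot γ}, {x : k | x ^ M = γ} := by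
      intro x hx
      exact Set.mem_biUnion (show Φ.IsRoot (x ^ M) from hx) rfl
    refine Set.Finite.subset (Set.Finite.biUnion hroots fun γ _ => ?_) hsub
    have hpoly : (Polynomial.X ^ M - Polynomial.C γ : Polynomial k) ≠ 0 := by
      intro h0
      have hc := congrArg (fun q : Polynomial k => q.coeff M) h0
      simp only [Polynomial.coeff_sub, Polynomial.coeff_X_pow, if_pos rfl,
        Polynomial.coeff_C, if_neg hM, Polynomial.coeff_zero, sub_zero] at hc
      exact one_ne_zero hc
    refine Set.Finite.subset (Polynomial.finite_setOf_isRoot hpoly) ?_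
    intro x hx
    simp only [Set.mem_setOf_eq, Polynomial.IsRoot, Polynomial.eval_sub, Polynomial.eval_pow,
      Polynomial.eval_X, Polynomial.eval_C]
    rw [show x ^ M = γ from hx]
    ring
  have hfin : (({0} : Set k) ∪ {x : k | Φ.eval (x ^ M) = 0}).Finite :=
    (Set.finite_singleton 0).union hBad
  obtain ⟨x, hx⟩ := hfin.infinite_compl.nonempty
  rw [Set.mem_compl_iff, Set.mem_union] at hx
  push_neg at hx
  refine ⟨x, fun h0 => hx.1 (by simp [h0]), fun φ hφ hev => ?_⟩
  refine hx.2 ?_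
  show Φ.eval (x ^ M) = 0
  rw [hΦdef, Polynomial.eval_list_prod]
  refine List.prod_eq_zero ?_
  exact List.mem_map.mpr ⟨φ, hφ, hev⟩

end LocalSel

structure Tw (R : Type*) where
  K : ℕ
  w : ℕ → R

section Tower

variable {R : Type*} [CommRing R]

noncomputable def extend (p : ℕ) (T : Tw R) (γ : R) : Tw R :=
  ⟨T.K + 1, wExt' p T.w γ (rOf p T.K T.w γ)⟩

def baseTw : Tw R := ⟨0, fun k => if k = 0 then (1 : R) else 0⟩

noncomputable def TF (p : ℕ) (γs : ℕ → R) (i : ℕ) : ℕ → Tw R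
  | 0 => baseTw
  | m + 1 => if m = i then TF p γs i m else extend p (TF p γs i m) (γs m)

theorem TF_congr {p : ℕ} {γs γs' : ℕ → R} (i : ℕ) :
    ∀ m, (∀ j, j < m → γs j = γs' j) → TF p γs i m = TF p γs' i m := by
  intro m
  induction m with
  | zero => intro _; rfl
  | succ m ih =>
    intro h
    show (if m = i then TF p γs i m else extend p (TF p γs i m) (γs m)) = _
    rw [ih (fun j hj => h j (by omega)), h m (by omega)]
    rfl

theorem TF_ge {p : ℕ} {γs : ℕ → R} : ∀ (m : ℕ) {i i' : ℕ}, m ≤ i → m ≤ i' →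
    TF p γs i m = TF p γs i' m := by
  intro m
  induction m with
  | zero => intro _ _ _ _; rfl
  | succ m ih =>
    intro i i' hi hi'
    calc TF p γs i (m + 1) = extend p (TF p γs i m) (γs m) := by
          show (if m = i then TF p γs i m else extend p (TF p γs i m) (γs m)) = _
          rw [if_neg (by omega)]
      _ = extend p (TF p γs i' m) (γs m) := by
          rw [ih (i := i) (i' := i') (by omega) (by omega)]
      _ = TF p γs i' (m + 1) := by
          show _ = (if m = i' then TF p γs i' m else extend p (TF p γs i' m) (γs m))
          rw [if_neg (by omega)]

theorem ev_baseTw {p : ℕ} (z : R) : ev p (baseTw (R := R)).K (baseTw (R := R)).w z = z := by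
  simp [ev, baseTw]

def cOf (p N : ℕ) (ts : ℕ → R) (j : ℕ) : R := ts j ^ p ^ N

def gOf (p N : ℕ) (ts : ℕ → R) (j : ℕ) : R := cOf p N ts j ^ (p - 1)

theorem gOf_deep {p N : ℕ} {ts : ℕ → R} (j : ℕ) : Deep p N (gOf p N ts j) :=
  ⟨ts j ^ (p - 1), by rw [gOf, cOf, ← pow_mul, ← pow_mul, mul_comm]⟩

theorem gOf_isUnit {p N : ℕ} {ts : ℕ → R} {j : ℕ} (h : IsUnit (ts j)) :
    IsUnit (gOf p N ts j) := (h.pow _).pow _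

end Tower

section Arith

theorem arith1 {n K : ℕ} (hK : K ≤ n) : K + 2 ≤ (n + 2) * (n + 2) - K * (n + 2) := by
  have h1 : (n + 2) * (n + 2) - K * (n + 2) = (n + 2 - K) * (n + 2) := by
    rw [Nat.sub_mul]
  have h4 : 2 * (n + 2) ≤ (n + 2 - K) * (n + 2) := Nat.mul_le_mul_right _ (by omega)
  omega

theorem arith2 {n K : ℕ} (hK : K ≤ n) :
    (n + 2) * (n + 2) - (K + 1) * (n + 2) ≤ ((n + 2) * (n + 2) - K * (n + 2)) - (K + 1) := by
  have h1 : (n + 2) * (n + 2) - K * (n + 2) = (n + 2 - K) * (n + 2) := by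
    rw [Nat.sub_mul]
  have h2 : (n + 2) * (n + 2) - (K + 1) * (n + 2) = (n + 2 - (K + 1)) * (n + 2) := by
    rw [Nat.sub_mul]
  have h3 : (n + 2 - K) * (n + 2) = (n + 2 - (K + 1)) * (n + 2) + (n + 2) := by
    rw [show n + 2 - K = (n + 2 - (K + 1)) + 1 by omega, add_mul, one_mul]
  omega

end Arith

structure GoodTower {R : Type*} [CommRing R] (p n N m i : ℕ) (ts : ℕ → R) (T : Tw R) : Prop where
  hK : T.K ≤ m
  hzero : ∀ k, T.K < k → T.w k = 0
  htop : IsUnit (T.w T.K)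
  hdeep : ∀ k, Deep p (N - T.K * (n + 2)) (T.w k)
  hmem : ∀ z : R, ∀ j, j < m → j ≠ i → ev p T.K T.w z ∈ Set.range (gpoly p (cOf p N ts j))

def GoodState {R : Type*} [CommRing R] (p n N m : ℕ) (ts : ℕ → R) : Prop :=
  (∀ j, j < m → IsUnit (ts j)) ∧
  (∀ i, i ≤ m → GoodTower p n N m i ts (TF p (gOf p N ts) i m)) ∧
  (∀ i, i < m → IsUnit (Rbar p (TF p (gOf p N ts) i m).K (TF p (gOf p N ts) i m).w
      (gOf p N ts i)))

section MainStep

variable {R : Type*} [CommRing R] [IsDomain R] {p : ℕ} [Fact p.Prime] [CharP R p]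

theorem GoodTower_congr_ts {n N m i : ℕ} {ts ts' : ℕ → R} {T : Tw R}
    (hts : ∀ j, j < m → ts' j = ts j) (hG : GoodTower p n N m i ts T) :
    GoodTower p n N m i ts' T := by
  refine ⟨hG.hK, hG.hzero, hG.htop, hG.hdeep, fun z j hj hji => ?_⟩
  have : cOf p N ts' j = cOf p N ts j := by rw [cOf, cOf, hts j hj]
  rw [this]
  exact hG.hmem z j hj hji

theorem GoodTower_change_i {n N m i i' : ℕ} {ts : ℕ → R} {T : Tw R}
    (hG : GoodTower p n N m i ts T) (hii' : ∀ j, j < m → j ≠ i' → j ≠ i) :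
    GoodTower p n N m i' ts T :=
  ⟨hG.hK, hG.hzero, hG.htop, hG.hdeep, fun z j hj hji => hG.hmem z j hj (hii' j hj hji)⟩

theorem GoodTower_succ_m {n N m i : ℕ} {ts : ℕ → R} {T : Tw R}
    (hG : GoodTower p n N m i ts T) (him : ∀ j, j < m + 1 → j ≠ i → j < m) :
    GoodTower p n N (m + 1) i ts T :=
  ⟨Nat.le_succ_of_le hG.hK, hG.hzero, hG.htop, hG.hdeep,
    fun z j hj hji => hG.hmem z j (him j hj hji) hji⟩

theorem extend_good {n N m i : ℕ} {ts : ℕ → R} {T : Tw R}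
    (hKn : T.K ≤ n) (hN : N = (n + 2) * (n + 2))
    (hG : GoodTower p n N m i ts T) (him : i ≠ m)
    (hrbar : IsUnit (Rbar p T.K T.w (gOf p N ts m))) :
    GoodTower p n N (m + 1) i ts (extend p T (gOf p N ts m)) := by
  set γ := gOf p N ts m with hγdef
  set d := N - T.K * (n + 2) with hd
  have harith1 := arith1 (n := n) (K := T.K) hKn
  have harith2 := arith2 (n := n) (K := T.K) hKn
  have hdK : T.K + 1 ≤ d := by omega
  have hγd : Deep p d γ := (gOf_deep m).mono (by omega)
  have htop1 : T.w (T.K + 1) = 0 := hG.hzero _ (by omega)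
  have hr : IsUnit (rOf p T.K T.w γ) := by
    have hpow := rOf_pow hG.hdeep hγd hdK
    refine isUnit_of_dvd_unit (dvd_pow_self _ ?_) (hpow ▸ hrbar)
    exact pow_ne_zero _ (Fact.out : p.Prime).ne_zero
  refine ⟨?_, ?_, ?_, ?_, ?_⟩
  · show T.K + 1 ≤ m + 1
    exact Nat.succ_le_succ hG.hK
  · exact wExt_zero γ (rOf p T.K T.w γ) hG.hzero
  · show IsUnit (wExt' p T.w γ (rOf p T.K T.w γ) (T.K + 1))
    rw [wExt_top γ (rOf p T.K T.w γ) htop1]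
    exact hG.htop.mul (hr.pow _)
  · intro k
    show Deep p (N - (T.K + 1) * (n + 2)) (wExt' p T.w γ (rOf p T.K T.w γ) k)
    refine wExt_deep (fun k' => (hG.hdeep k').mono (by omega)) (hγd.mono (by omega)) ?_ k
    exact (rOf_deep hG.hdeep hγd hdK).mono (by omega)
  · intro z j hj hji
    by_cases hjm : j = m
    · subst hjm
      exact ext_mem_new hG.hdeep hγd hdK htop1 rfl z
    · show ev p (T.K + 1) (wExt' p T.w γ (rOf p T.K T.w γ)) z ∈ _
      rw [ev_wExt γ (rOf p T.K T.w γ) htop1 z]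
      exact hG.hmem _ j (by omega) hji

end MainStep

section GoodStep

variable {R : Type*} [CommRing R] [IsDomain R] [IsLocalRing R] {p : ℕ} [Fact p.Prime]
  [CharP R p]

theorem good_zero (n N : ℕ) (ts : ℕ → R) : GoodState p n N 0 ts := by
  refine ⟨fun j hj => absurd hj (by omega), fun i hi => ?_, fun i hi => absurd hi (by omega)⟩
  have hbase : TF p (gOf p N ts) i 0 = baseTw := rfl
  rw [hbase]
  refine ⟨le_rfl, ?_, ?_, ?_, fun z j hj _ => absurd hj (by omega)⟩
  · intro k hk
    show (if k = 0 then (1 : R) else 0) = 0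
    rw [if_neg (by omega)]
  · show IsUnit (if (0 : ℕ) = 0 then (1 : R) else 0)
    rw [if_pos rfl]; exact isUnit_one
  · intro k
    show Deep p _ (if k = 0 then (1 : R) else 0)
    split
    · exact deep_one _
    · exact deep_zero _

theorem good_step [Infinite (IsLocalRing.ResidueField R)] {n N m : ℕ} {ts : ℕ → R}
    (hN : N = (n + 2) * (n + 2)) (hm : m < n) (hS : GoodState p n N m ts) :
    ∃ ts' : ℕ → R, (∀ j, j < m → ts' j = ts j) ∧ GoodState p n N (m + 1) ts' := by
  classical
  obtain ⟨hSu, hSt, hSr⟩ := hS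
  set rs : R →+* IsLocalRing.ResidueField R := IsLocalRing.residue R with hrs
  set γs := gOf p N ts with hγs
  have hp1 : 1 ≤ p := (Fact.out : p.Prime).one_lt.le
  set ψ : ℕ → Polynomial (IsLocalRing.ResidueField R) :=
    fun i => PsiP p (TF p γs i m).K (fun k => rs ((TF p γs i m).w k)) with hψ
  set Φ : ℕ → Polynomial (IsLocalRing.ResidueField R) := fun i =>
    Polynomial.C ((rs (γs i)) ^ p ^ ((TF p γs i m).K + 1) * rs (Rbar p (TF p γs i m).K (TF p γs i m).w (γs i)))
        * (ψ i) ^ (p - 1)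
      - Polynomial.C ((rs (Rbar p (TF p γs i m).K (TF p γs i m).w (γs i))) ^ p)
        * Polynomial.X ^ (p ^ ((TF p γs i m).K + 1)) with hΦ
  have hψne : ∀ i, i ≤ m → ψ i ≠ 0 := by
    intro i hi
    exact PsiP_ne_zero hp1 (residue_ne_zero_of_isUnit ((hSt i hi).htop))
  have hΦne : ∀ i, i < m → Φ i ≠ 0 := by
    intro i hi hzero0
    have hρ : rs (Rbar p (TF p γs i m).K (TF p γs i m).w (γs i)) ≠ 0 :=
      residue_ne_zero_of_isUnit (hSr i hi)
    have hdeg : ((ψ i) ^ (p - 1)).natDegree < p ^ ((TF p γs i m).K + 1) := by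
      have h1 : (ψ i).natDegree ≤ Efn p (TF p γs i m).K (TF p γs i m).K := PsiP_natDegree_le hp1 _ _
      have h2 := Polynomial.natDegree_pow_le (p := ψ i) (n := p - 1)
      have h3 := pE_identity hp1 (TF p γs i m).K
      have h4 : (p - 1) * (ψ i).natDegree ≤ (p - 1) * Efn p (TF p γs i m).K (TF p γs i m).K :=
        Nat.mul_le_mul_left _ h1
      omega
    rw [hΦ] at hzero0
    have hc := congrArg (fun q : Polynomial _ => q.coeff (p ^ ((TF p γs i m).K + 1))) hzero0
    simp only [Polynomial.coeff_sub, Polynomial.coeff_C_mul, Polynomial.coeff_X_pow,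
      eq_self_iff_true, if_true, if_pos rfl, mul_one, Polynomial.coeff_zero] at hc
    rw [Polynomial.coeff_eq_zero_of_natDegree_lt hdeg, mul_zero, zero_sub, neg_eq_zero] at hc
    exact pow_ne_zero p hρ hc
  set L : List (Polynomial (IsLocalRing.ResidueField R)) :=
    ((List.range (m + 1)).map ψ) ++ ((List.range m).map Φ) with hL
  have hmemψ : ∀ i, i ≤ m → ψ i ∈ L := fun i hi =>
    List.mem_append_left _ (List.mem_map.mpr ⟨i, List.mem_range.mpr (by omega), rfl⟩)
  have hmemΦ : ∀ i, i < m → Φ i ∈ L := fun i hi =>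
    List.mem_append_right _ (List.mem_map.mpr ⟨i, List.mem_range.mpr hi, rfl⟩)
  have hLne : ∀ φ ∈ L, φ ≠ 0 := by
    intro φ hφ
    rw [hL, List.mem_append] at hφ
    rcases hφ with h | h
    · obtain ⟨i, hi, rfl⟩ := List.mem_map.mp h
      exact hψne i (by have := List.mem_range.mp hi; omega)
    · obtain ⟨i, hi, rfl⟩ := List.mem_map.mp h
      exact hΦne i (List.mem_range.mp hi)
  have hM : p ^ N * (p - 1) ≠ 0 :=
    Nat.mul_ne_zero (pow_ne_zero _ (by omega)) (by have := (Fact.out : p.Prime).two_le; omega)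
  obtain ⟨xb, hxb0, hxbL⟩ := exists_avoid (p ^ N * (p - 1)) hM L hLne
  obtain ⟨t, ht⟩ := IsLocalRing.residue_surjective (R := R) xb
  have htu : IsUnit t := isUnit_of_residue_ne_zero (by rw [show IsLocalRing.residue R t = rs t from rfl, ht]; exact hxb0)
  set ts' : ℕ → R := Function.update ts m t with hts'
  have htsagree : ∀ j, j < m → ts' j = ts j := fun j hj =>
    Function.update_of_ne (by omega) _ _
  set γs' := gOf p N ts' with hγs'
  have hγagree : ∀ j, j < m → γs' j = γs j := by
    intro j hj
    show gOf p N ts' j = gOf p N ts j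
    unfold gOf cOf
    rw [htsagree j hj]
  have hTFeq : ∀ i, TF p γs' i m = TF p γs i m := fun i => TF_congr i m hγagree
  have hγm' : rs (γs' m) = xb ^ (p ^ N * (p - 1)) := by
    show rs (gOf p N ts' m) = _
    unfold gOf cOf
    rw [hts', Function.update_self, map_pow, map_pow, ht, ← pow_mul]
  have hdeepγ' : Deep p N (γs' m) := gOf_deep m
  have hKn : ∀ i, i ≤ m → (TF p γs i m).K ≤ n := fun i hi => le_trans (hSt i hi).hK (by omega)
  have hdK : ∀ i, i ≤ m → (TF p γs i m).K + 1 ≤ N - (TF p γs i m).K * (n + 2) := by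
    intro i hi
    show (TF p γs i m).K + 1 ≤ N - (TF p γs i m).K * (n + 2)
    have h1 := arith1 (n := n) (K := (TF p γs i m).K) (le_trans (hSt i hi).hK (by omega))
    omega
  have hRB : ∀ i, i ≤ m → IsUnit (Rbar p (TF p γs i m).K (TF p γs i m).w (γs' m)) := by
    intro i hi
    apply isUnit_of_residue_ne_zero
    show rs _ ≠ 0
    rw [map_Rbar rs p (TF p γs i m).K (TF p γs i m).w (γs' m), ← PsiP_eval, hγm']
    exact hxbL (ψ i) (hmemψ i hi)
  have hGood' : ∀ i, i ≤ m → GoodTower p n N m i ts' (TF p γs i m) := fun i hi =>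
    GoodTower_congr_ts htsagree (hSt i hi)
  refine ⟨ts', htsagree, ?_, ?_, ?_⟩
  · -- units
    intro j hj
    rcases Nat.lt_or_ge j m with h | h
    · rw [htsagree j h]; exact hSu j h
    · have : j = m := by omega
      subst this
      rw [hts', Function.update_self]
      exact htu
  · -- towers
    intro i hi
    rcases Nat.lt_or_ge i m with h | h
    · have hT'i : TF p (gOf p N ts') i (m + 1) = extend p (TF p γs i m) (gOf p N ts' m) := by
        show (if m = i then TF p γs' i m else extend p (TF p γs' i m) (γs' m)) = _
        rw [if_neg (by omega), hTFeq i]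
      rw [hT'i]
      exact extend_good (hKn i h.le) hN (hGood' i h.le) (by omega) (hRB i h.le)
    · rcases Nat.lt_or_ge i (m + 1) with h' | h'
      · have him : i = m := by omega
        have hT'm : TF p (gOf p N ts') i (m + 1) = TF p γs i m := by
          show (if m = i then TF p γs' i m else _) = _
          rw [if_pos him.symm, hTFeq i]
        rw [hT'm]
        exact GoodTower_succ_m (hGood' i (by omega)) (fun j hj hji => by omega)
      · have him : i = m + 1 := by omega
        have hT' : TF p (gOf p N ts') i (m + 1) = extend p (TF p γs m m) (gOf p N ts' m) := by
          show (if m = i then _ else extend p (TF p γs' i m) (γs' m)) = _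
          rw [if_neg (by omega), TF_ge m (by omega) (le_refl m), hTFeq m]
        rw [hT', him]
        have hGm : GoodTower p n N m (m + 1) ts' (TF p γs m m) :=
          GoodTower_change_i (hGood' m le_rfl) (fun j hj _ => by omega)
        exact extend_good (hKn m le_rfl) hN hGm (by omega) (hRB m le_rfl)
  · -- Rbar units
    intro i hi
    rcases Nat.lt_or_ge i m with h | h
    · have hT'i : TF p (gOf p N ts') i (m + 1) = extend p (TF p γs i m) (gOf p N ts' m) := by
        show (if m = i then TF p γs' i m else extend p (TF p γs' i m) (γs' m)) = _
        rw [if_neg (by omega), hTFeq i]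
      rw [hT'i]
      have hγieq : gOf p N ts' i = γs i := hγagree i h
      rw [hγieq]
      have htop1 : (TF p γs i m).w ((TF p γs i m).K + 1) = 0 := (hSt i h.le).hzero _ (by omega)
      have hdw : ∀ k, Deep p (N - (TF p γs i m).K * (n + 2)) ((TF p γs i m).w k) := (hSt i h.le).hdeep
      have hγd : Deep p (N - (TF p γs i m).K * (n + 2)) (gOf p N ts' m) :=
        (gOf_deep (ts := ts') m).mono (by omega)
      show IsUnit (Rbar p ((TF p γs i m).K + 1)
        (wExt' p (TF p γs i m).w (gOf p N ts' m) (rOf p (TF p γs i m).K (TF p γs i m).w (gOf p N ts' m))) (γs i))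
      rw [Rbar_wExt _ _ _ htop1]
      apply isUnit_of_residue_ne_zero
      show rs _ ≠ 0
      have hrpow : rOf p (TF p γs i m).K (TF p γs i m).w (gOf p N ts' m) ^ ((p - 1) * p ^ (TF p γs i m).K)
          = (Rbar p (TF p γs i m).K (TF p γs i m).w (gOf p N ts' m)) ^ (p - 1) := by
        rw [mul_comm (p - 1) (p ^ (TF p γs i m).K), pow_mul, rOf_pow hdw hγd (hdK i h.le)]
      rw [hrpow]
      simp only [map_sub, map_mul, map_pow]
      have hγm'' : rs (gOf p N ts' m) = xb ^ (p ^ N * (p - 1)) := hγm'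
      have hψeval : rs (Rbar p (TF p γs i m).K (TF p γs i m).w (gOf p N ts' m))
          = (ψ i).eval (xb ^ (p ^ N * (p - 1))) := by
        rw [map_Rbar rs p (TF p γs i m).K (TF p γs i m).w (gOf p N ts' m), ← PsiP_eval, hγm'']
      have heq : rs (γs i) ^ p ^ ((TF p γs i m).K + 1)
            * rs (Rbar p (TF p γs i m).K (TF p γs i m).w (γs i))
            * rs (Rbar p (TF p γs i m).K (TF p γs i m).w (gOf p N ts' m)) ^ (p - 1)
          - rs (gOf p N ts' m) ^ p ^ ((TF p γs i m).K + 1)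
            * rs (Rbar p (TF p γs i m).K (TF p γs i m).w (γs i)) ^ p
          = (Φ i).eval (xb ^ (p ^ N * (p - 1))) := by
        rw [hΦ]
        simp only [Polynomial.eval_sub, Polynomial.eval_mul, Polynomial.eval_C,
          Polynomial.eval_pow, Polynomial.eval_X]
        rw [hψeval, hγm'']
        ring
      rw [heq]
      exact hxbL (Φ i) (hmemΦ i h)
    · have him : i = m := by omega
      have hT'm : TF p (gOf p N ts') i (m + 1) = TF p γs i m := by
        show (if m = i then TF p γs' i m else _) = _
        rw [if_pos him.symm, hTFeq i]
      rw [hT'm, him]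
      exact hRB m le_rfl

end GoodStep

section Reach

variable {R : Type*} [CommRing R] [IsDomain R] [IsLocalRing R] {p : ℕ} [Fact p.Prime]
  [CharP R p]

theorem good_reach [Infinite (IsLocalRing.ResidueField R)] {n N : ℕ}
    (hN : N = (n + 2) * (n + 2)) :
    ∀ m, m ≤ n → ∃ ts : ℕ → R, GoodState p n N m ts := by
  intro m
  induction m with
  | zero => exact fun _ => ⟨fun _ => 1, good_zero n N _⟩
  | succ m ih =>
    intro hm
    obtain ⟨ts, hS⟩ := ih (by omega)
    obtain ⟨ts', _, hS'⟩ := good_step hN (by omega) hS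
    exact ⟨ts', hS'⟩

end Reach

end KSW

open KSW in
/-- Let `p` be a prime and `R` a commutative local integral domain of
characteristic `p` with infinite residue field.  If the Baldwin–Saxl property holds for the
family of images of the maps `g_c : x ↦ x^p - c^(p-1)*x` for some `n ≥ 2`, then the
Artin–Schreier map `x ↦ x^p - x` is surjective on `R`. -/
theorem stmt_0 (p : ℕ) (hp : p.Prime) (R : Type*) [CommRing R] [IsDomain R] [IsLocalRing R]
    [CharP R p] (hres : Infinite (IsLocalRing.ResidueField R))
    (hBS : ∃ n : ℕ, 2 ≤ n ∧ ∀ c : Fin n → R, ∃ i : Fin n,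
      (⋂ j ≠ i, Set.range (fun x : R => x ^ p - (c j) ^ (p - 1) * x)) ⊆
        Set.range (fun x : R => x ^ p - (c i) ^ (p - 1) * x)) :
    Function.Surjective (fun x : R => x ^ p - x) := by
  haveI : Fact p.Prime := ⟨hp⟩
  obtain ⟨n, hn2, hBS⟩ := hBS
  set N := (n + 2) * (n + 2) with hN
  obtain ⟨ts, hSu, hSt, hSr⟩ := good_reach (R := R) (p := p) (n := n) (N := N) rfl n le_rfl
  set c : Fin n → R := fun j => cOf p N ts j.val with hc
  obtain ⟨i, hi⟩ := hBS c
  have hin : i.val < n := i.isLt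
  -- the tower for i
  have hGi := hSt i.val hin.le
  set T := TF p (gOf p N ts) i.val n with hT
  have hmemT : ∀ z : R, ev p T.K T.w z ∈ Set.range (gpoly p (c i)) := by
    intro z
    apply hi
    refine Set.mem_iInter.mpr fun j => Set.mem_iInter.mpr fun hj => ?_
    have hjv : j.val ≠ i.val := fun h => hj (Fin.ext h)
    exact hGi.hmem z j.val j.isLt hjv
  -- division data
  have hp1 : 1 ≤ p := hp.one_lt.le
  have hKn : T.K ≤ n := hGi.hK
  have hdK : T.K + 1 ≤ N - T.K * (n + 2) := by
    have := arith1 (n := n) (K := T.K) hKn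
    omega
  have hγd : Deep p (N - T.K * (n + 2)) (gOf p N ts i.val) :=
    (gOf_deep i.val).mono (by omega)
  have hrunit : IsUnit (rOf p T.K T.w (gOf p N ts i.val)) := by
    have hpow := rOf_pow hGi.hdeep hγd hdK
    have hu : IsUnit (rOf p T.K T.w (gOf p N ts i.val) ^ p ^ T.K) := by
      rw [hpow]; exact hSr i.val hin
    exact isUnit_of_dvd_unit (dvd_pow_self _ (pow_ne_zero T.K hp.ne_zero)) hu
  have hγeq : gOf p N ts i.val = (c i) ^ (p - 1) := rfl
  have hrange : ∀ x : R, rOf p T.K T.w (gOf p N ts i.val) * x ∈ Set.range (gpoly p (c i)) := by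
    intro x
    have hdiv := div_eval hGi.hdeep hγd hdK x
    set B := ∑ j ∈ Finset.range T.K,
      delta p T.w (gOf p N ts i.val) T.K (T.K - j) * x ^ p ^ j with hB
    have hBg : B ^ p - gOf p N ts i.val * B = gpoly p (c i) B := by
      rw [gpoly, hγeq]
    have hr : rOf p T.K T.w (gOf p N ts i.val) * x
        = ev p T.K T.w x - gpoly p (c i) B := by
      rw [← hBg, hdiv]; ring
    rw [hr]
    exact gpoly_range_sub (hmemT x) ⟨B, rfl⟩
  -- conclude surjectivity
  intro a
  obtain ⟨ru, hru⟩ := hrunit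
  obtain ⟨x, hx⟩ := hrange (↑ru⁻¹ * ((c i) ^ p * a))
  have hx' : gpoly p (c i) x = (c i) ^ p * a := by
    rw [hx, ← hru, ← mul_assoc, Units.mul_inv, one_mul]
  have hcu : IsUnit (c i) := (hSu i.val hin).pow _
  obtain ⟨cu, hcu'⟩ := hcu
  refine ⟨↑cu⁻¹ * x, ?_⟩
  show (↑cu⁻¹ * x) ^ p - (↑cu⁻¹ * x) = a
  have hcx : (c i) * (↑cu⁻¹ * x) = x := by
    rw [← hcu', ← mul_assoc, Units.mul_inv, one_mul]
  have hkey : (c i) ^ p * ((↑cu⁻¹ * x) ^ p - (↑cu⁻¹ * x)) = (c i) ^ p * a := by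
    have h1 : (c i) ^ p * (↑cu⁻¹ * x : R) ^ p = x ^ p := by
      rw [← mul_pow, hcx]
    have h2 : (c i) ^ p * (↑cu⁻¹ * x : R) = (c i) ^ (p - 1) * x := by
      have : (c i) ^ p = (c i) ^ (p - 1) * (c i) := by
        conv_lhs => rw [show p = (p - 1) + 1 by omega]
        rw [pow_succ]
      rw [this, mul_assoc, hcx]
    rw [mul_sub, h1, h2, ← hx']
    rw [gpoly]
  have hcu2 : IsUnit (c i) := ⟨cu, hcu'⟩
  have hcup : IsUnit ((c i) ^ p) := hcu2.pow p
  exact hcup.mul_left_cancel hkey
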